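/- arXiv:2304.03324 — 8 statements merged into one kernel-verified Lean document; each statement's English description precedes it below -/
import Mathlib

section
/- Let X be a finite-dimensional Banach space over ℝ or ℂ, let 1 < p < ∞ with conjugate exponent q, and let ({f_j}_{j=1}^n, {τ_j}_{j=1}^n) and ({g_k}_{k=1}^m, {ω_k}_{k=1}^m) be p-Schauder frames for X. Then for every nonzero x ∈ X, (‖θ_f x‖_0)^{1/p} · (‖θ_g x‖_0)^{1/q} ≥ 1 / max_{1≤j≤n, 1≤k≤m} |f_j(ω_k)|, where ‖·‖_0 counts nonzero coordinates and θ_f x = (f_j(x))_j, θ_g x = (g_k(x))_k. -/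
open Finset

theorem functional_uncertainty_principle
    {𝕂 : Type*} [RCLike 𝕂] {X : Type*} [NormedAddCommGroup X] [NormedSpace 𝕂 X]
    [FiniteDimensional 𝕂 X]
    {n m : ℕ} (p q : ℝ) (hp : 1 < p) (hpq : 1 / p + 1 / q = 1)
    (f : Fin n → (X →L[𝕂] 𝕂)) (τ : Fin n → X)
    (g : Fin m → (X →L[𝕂] 𝕂)) (ω : Fin m → X)
    (hf1 : ∀ x : X, ‖x‖ ^ p = ∑ j, ‖f j x‖ ^ p)
    (hf2 : ∀ x : X, x = ∑ j, f j x • τ j)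
    (hg1 : ∀ x : X, ‖x‖ ^ p = ∑ k, ‖g k x‖ ^ p)
    (hg2 : ∀ x : X, x = ∑ k, g k x • ω k)
    (x : X) (hx : x ≠ 0) :
    ((univ.filter fun j => f j x ≠ 0).card : ℝ) ^ (1 / p) *
      ((univ.filter fun k => g k x ≠ 0).card : ℝ) ^ (1 / q) ≥
      1 / (⨆ jk : Fin n × Fin m, ‖f jk.1 (ω jk.2)‖) := by
  classical
  have hp0 : (0:ℝ) < p := lt_trans one_pos hp
  have hpq' : Real.HolderConjugate p q := Real.holderConjugate_iff.mpr ⟨hp, by simpa [one_div] using hpq⟩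
  have hq0 : (0:ℝ) < q := hpq'.symm.pos
  set T := univ.filter fun j => f j x ≠ 0 with hT
  set S := univ.filter fun k => g k x ≠ 0 with hS
  set M := ⨆ jk : Fin n × Fin m, ‖f jk.1 (ω jk.2)‖ with hM
  have hxn : (0:ℝ) < ‖x‖ := norm_pos_iff.2 hx
  have hxp : (0:ℝ) < ‖x‖ ^ p := Real.rpow_pos_of_pos hxn p
  have hM0 : (0:ℝ) ≤ M := Real.iSup_nonneg fun _ => norm_nonneg _
  rcases eq_or_lt_of_le hM0 with h | hMpos
  · rw [ge_iff_le, ← h, div_zero]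
    exact mul_nonneg (Real.rpow_nonneg (Nat.cast_nonneg _) _) (Real.rpow_nonneg (Nat.cast_nonneg _) _)
  have hbdd : BddAbove (Set.range fun jk : Fin n × Fin m => ‖f jk.1 (ω jk.2)‖) :=
    Set.Finite.bddAbove (Set.finite_range _)
  have hMle : ∀ (j : Fin n) (k : Fin m), ‖f j (ω k)‖ ≤ M := fun j k => le_ciSup hbdd (j, k)
  -- per-coordinate estimate
  have key : ∀ j : Fin n, ‖f j x‖ ≤ M * ∑ k ∈ S, ‖g k x‖ := by
    intro j
    have hx2 : f j x = ∑ k, g k x * f j (ω k) := by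
      conv_lhs => rw [hg2 x]
      rw [map_sum]
      simp [smul_eq_mul]
    calc ‖f j x‖ = ‖∑ k, g k x * f j (ω k)‖ := by rw [hx2]
      _ ≤ ∑ k, ‖g k x * f j (ω k)‖ := norm_sum_le _ _
      _ = ∑ k ∈ S, ‖g k x * f j (ω k)‖ := by
          refine (Finset.sum_filter_of_ne ?_).symm
          intro k _ hk h0
          exact hk (by simp [h0])
      _ ≤ ∑ k ∈ S, ‖g k x‖ * M := by
          refine Finset.sum_le_sum fun k _ => ?_
          rw [norm_mul]
          exact mul_le_mul_of_nonneg_left (hMle j k) (norm_nonneg _)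
      _ = M * ∑ k ∈ S, ‖g k x‖ := by rw [← Finset.sum_mul, mul_comm]
  -- Hölder
  have holder : ∑ k ∈ S, ‖g k x‖ ≤ (S.card : ℝ) ^ (1/q) * ‖x‖ := by
    have h1 : ∑ k ∈ S, |(1:ℝ)| ^ q = (S.card : ℝ) := by simp
    have h2 : (∑ k ∈ S, |‖g k x‖| ^ p) ≤ ‖x‖ ^ p := by
      simp only [abs_norm]
      rw [hg1 x]
      exact Finset.sum_le_sum_of_subset_of_nonneg (Finset.subset_univ _)
        (fun k _ _ => by positivity)
    calc ∑ k ∈ S, ‖g k x‖ = ∑ k ∈ S, 1 * ‖g k x‖ := by simp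
      _ ≤ (∑ k ∈ S, |(1:ℝ)| ^ q) ^ (1/q) * (∑ k ∈ S, |‖g k x‖| ^ p) ^ (1/p) :=
          Real.inner_le_Lp_mul_Lq S _ _ hpq'.symm
      _ ≤ (S.card : ℝ) ^ (1/q) * ‖x‖ := by
          rw [h1]
          refine mul_le_mul_of_nonneg_left ?_ (Real.rpow_nonneg (Nat.cast_nonneg _) _)
          have : (∑ k ∈ S, |‖g k x‖| ^ p) ^ (1/p) ≤ (‖x‖ ^ p) ^ (1/p) :=
            Real.rpow_le_rpow (by positivity) h2 (by positivity)
          calc (∑ k ∈ S, |‖g k x‖| ^ p) ^ (1/p) ≤ (‖x‖ ^ p) ^ (1/p) := this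
            _ = ‖x‖ := by
                rw [← Real.rpow_mul (norm_nonneg x), mul_one_div_cancel hp0.ne', Real.rpow_one]
  -- the main inequality
  have hsc : (0:ℝ) ≤ (S.card : ℝ) ^ (1/q) := Real.rpow_nonneg (Nat.cast_nonneg _) _
  have main : ‖x‖ ^ p ≤ (T.card : ℝ) * (M * ((S.card : ℝ) ^ (1/q) * ‖x‖)) ^ p := by
    calc ‖x‖ ^ p = ∑ j, ‖f j x‖ ^ p := hf1 x
      _ = ∑ j ∈ T, ‖f j x‖ ^ p := by
          refine (Finset.sum_filter_of_ne ?_).symm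
          intro j _ hj h0
          exact hj (by simp [h0, Real.zero_rpow hp0.ne'])
      _ ≤ ∑ j ∈ T, (M * ((S.card : ℝ) ^ (1/q) * ‖x‖)) ^ p := by
          refine Finset.sum_le_sum fun j _ => ?_
          refine Real.rpow_le_rpow (norm_nonneg _) ?_ hp0.le
          refine le_trans (key j) ?_
          rw [mul_le_mul_iff_right₀ hMpos]
          calc ∑ k ∈ S, ‖g k x‖ ≤ (S.card : ℝ) ^ (1/q) * ‖x‖ := holder
            _ = _ := rfl
      _ = (T.card : ℝ) * (M * ((S.card : ℝ) ^ (1/q) * ‖x‖)) ^ p := by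
          rw [Finset.sum_const, nsmul_eq_mul]
  -- rewrite the right-hand side
  have h3 : ((T.card : ℝ) ^ (1/p)) ^ p = (T.card : ℝ) := by
    rw [← Real.rpow_mul (Nat.cast_nonneg _), one_div_mul_cancel hp0.ne', Real.rpow_one]
  have expand : (T.card : ℝ) * (M * ((S.card : ℝ) ^ (1/q) * ‖x‖)) ^ p
      = (M * ((T.card : ℝ) ^ (1/p) * (S.card : ℝ) ^ (1/q))) ^ p * ‖x‖ ^ p := by
    rw [Real.mul_rpow hMpos.le (mul_nonneg (Real.rpow_nonneg (Nat.cast_nonneg _) _) (norm_nonneg _)), Real.mul_rpow hsc (norm_nonneg x),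
        Real.mul_rpow hMpos.le (mul_nonneg (Real.rpow_nonneg (Nat.cast_nonneg _) _) (Real.rpow_nonneg (Nat.cast_nonneg _) _)),
        Real.mul_rpow (Real.rpow_nonneg (Nat.cast_nonneg _) _ : (0:ℝ) ≤ (T.card : ℝ) ^ (1/p)) hsc, h3]
    ring
  rw [expand] at main
  have h4 : 1 ≤ (M * ((T.card : ℝ) ^ (1/p) * (S.card : ℝ) ^ (1/q))) ^ p :=
    (le_mul_iff_one_le_left hxp).mp main
  have h5 : 1 ≤ M * ((T.card : ℝ) ^ (1/p) * (S.card : ℝ) ^ (1/q)) := by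
    by_contra hlt
    push_neg at hlt
    have := Real.rpow_lt_one (mul_nonneg hMpos.le (mul_nonneg (Real.rpow_nonneg (Nat.cast_nonneg _) _) (Real.rpow_nonneg (Nat.cast_nonneg _) _))) hlt hp0
    linarith
  rw [ge_iff_le, div_le_iff₀ hMpos, mul_comm]
  exact h5
end

section
/- Let X be a finite-dimensional Banach space over ℝ or ℂ, let 1 < p < ∞ with conjugate exponent q, and let ({f_j}_{j=1}^n, {τ_j}_{j=1}^n) and ({g_k}_{k=1}^m, {ω_k}_{k=1}^m) be p-Schauder frames for X. Then for every nonzero x ∈ X, (‖θ_g x‖_0)^{1/p} · (‖θ_f x‖_0)^{1/q} ≥ 1 / max_{1≤j≤n, 1≤k≤m} |g_k(τ_j)|. -/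
open Finset

theorem functional_uncertainty_principle_second
    {𝕂 : Type*} [RCLike 𝕂] {X : Type*} [NormedAddCommGroup X] [NormedSpace 𝕂 X]
    [FiniteDimensional 𝕂 X]
    {n m : ℕ} (p q : ℝ) (hp : 1 < p) (hpq : 1 / p + 1 / q = 1)
    (f : Fin n → (X →L[𝕂] 𝕂)) (τ : Fin n → X)
    (g : Fin m → (X →L[𝕂] 𝕂)) (ω : Fin m → X)
    (hf1 : ∀ x : X, ‖x‖ ^ p = ∑ j, ‖f j x‖ ^ p)
    (hf2 : ∀ x : X, x = ∑ j, f j x • τ j)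
    (hg1 : ∀ x : X, ‖x‖ ^ p = ∑ k, ‖g k x‖ ^ p)
    (hg2 : ∀ x : X, x = ∑ k, g k x • ω k)
    (x : X) (hx : x ≠ 0) :
    ((univ.filter fun k => g k x ≠ 0).card : ℝ) ^ (1 / p) *
      ((univ.filter fun j => f j x ≠ 0).card : ℝ) ^ (1 / q) ≥
      1 / (⨆ jk : Fin n × Fin m, ‖g jk.2 (τ jk.1)‖) := by
  set M : ℝ := ⨆ jk : Fin n × Fin m, ‖g jk.2 (τ jk.1)‖ with hM_def
  set Sf := univ.filter fun j => f j x ≠ 0 with hSf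
  set Sg := univ.filter fun k => g k x ≠ 0 with hSg
  have hpq' : Real.HolderConjugate p q := Real.holderConjugate_iff.mpr ⟨hp, by
    rw [← one_div, ← one_div]; exact hpq⟩
  have hq0 : 0 < q := hpq'.symm.pos
  have hp0 : 0 < p := hpq'.pos
  have hxpos : (0:ℝ) < ‖x‖ := norm_pos_iff.mpr hx
  have hxp : (0:ℝ) < ‖x‖ ^ p := Real.rpow_pos_of_pos hxpos p
  -- nonnegativity of LHS
  have hLHS : (0:ℝ) ≤ (Sg.card : ℝ) ^ (1/p) * (Sf.card : ℝ) ^ (1/q) :=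
    mul_nonneg (Real.rpow_nonneg (Nat.cast_nonneg _) _)
      (Real.rpow_nonneg (Nat.cast_nonneg _) _)
  rcases le_or_gt M 0 with hM | hM
  · exact le_trans (div_nonpos_of_nonneg_of_nonpos zero_le_one hM) hLHS
  -- main case : M > 0
  have hM_bdd : BddAbove (Set.range fun jk : Fin n × Fin m => ‖g jk.2 (τ jk.1)‖) :=
    (Set.finite_range _).bddAbove
  have hMle : ∀ (j : Fin n) (k : Fin m), ‖g k (τ j)‖ ≤ M := fun j k =>
    le_ciSup hM_bdd (j, k)
  -- Hölder step
  have holder : ∑ j ∈ Sf, ‖f j x‖ ≤ ‖x‖ * (Sf.card : ℝ) ^ (1/q) := by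
    have h1 := Real.inner_le_Lp_mul_Lq_of_nonneg Sf hpq'
      (f := fun j => ‖f j x‖) (g := fun _ => 1)
      (fun i _ => norm_nonneg _) (fun i _ => zero_le_one)
    simp only [mul_one, Real.one_rpow, Finset.sum_const, nsmul_eq_mul] at h1
    refine h1.trans ?_
    refine mul_le_mul_of_nonneg_right ?_ (Real.rpow_nonneg (Nat.cast_nonneg _) _)
    calc (∑ j ∈ Sf, ‖f j x‖ ^ p) ^ (1/p)
          ≤ (∑ j, ‖f j x‖ ^ p) ^ (1/p) := by
            gcongr
            exact Finset.filter_subset _ _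
        _ = (‖x‖ ^ p) ^ (1/p) := by rw [hf1]
        _ = ‖x‖ := by
            rw [← Real.rpow_mul hxpos.le, mul_one_div, div_self hp0.ne', Real.rpow_one]
  -- bound on each g k x
  have hgk : ∀ k : Fin m, ‖g k x‖ ≤ M * (‖x‖ * (Sf.card : ℝ) ^ (1/q)) := by
    intro k
    have : g k x = ∑ j, f j x * g k (τ j) := by
      conv_lhs => rw [hf2 x]
      rw [map_sum]
      simp [smul_eq_mul]
    rw [this]
    calc ‖∑ j, f j x * g k (τ j)‖ ≤ ∑ j, ‖f j x * g k (τ j)‖ := norm_sum_le _ _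
      _ = ∑ j, ‖f j x‖ * ‖g k (τ j)‖ := by simp [norm_mul]
      _ ≤ ∑ j, ‖f j x‖ * M := by
          gcongr with j
          exact hMle j k
      _ = (∑ j, ‖f j x‖) * M := by rw [← Finset.sum_mul]
      _ = (∑ j ∈ Sf, ‖f j x‖) * M := by
          congr 1
          refine (Finset.sum_subset (Finset.filter_subset _ _) ?_).symm
          intro j _ hj
          simp only [hSf, Finset.mem_filter, Finset.mem_univ, true_and, not_not] at hj
          simp [hj]
      _ ≤ (‖x‖ * (Sf.card : ℝ) ^ (1/q)) * M := by
          gcongr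
      _ = M * (‖x‖ * (Sf.card : ℝ) ^ (1/q)) := mul_comm _ _
  -- main chain
  have key : ‖x‖ ^ p ≤ (Sg.card : ℝ) * (M * (‖x‖ * (Sf.card : ℝ) ^ (1/q))) ^ p := by
    rw [hg1 x]
    have hsum : ∑ k, ‖g k x‖ ^ p = ∑ k ∈ Sg, ‖g k x‖ ^ p := by
      refine (Finset.sum_subset (Finset.filter_subset _ _) ?_).symm
      intro k _ hk
      simp only [hSg, Finset.mem_filter, Finset.mem_univ, true_and, not_not] at hk
      simp [hk, Real.zero_rpow hp0.ne']
    rw [hsum]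
    calc ∑ k ∈ Sg, ‖g k x‖ ^ p
        ≤ ∑ k ∈ Sg, (M * (‖x‖ * (Sf.card : ℝ) ^ (1/q))) ^ p := by
          gcongr with k
          exact hgk k
      _ = (Sg.card : ℝ) * (M * (‖x‖ * (Sf.card : ℝ) ^ (1/q))) ^ p := by
          rw [Finset.sum_const, nsmul_eq_mul]
  -- conclude
  have hB : (0:ℝ) ≤ ‖x‖ * (Sf.card : ℝ) ^ (1/q) :=
    mul_nonneg hxpos.le (Real.rpow_nonneg (Nat.cast_nonneg _) _)
  have hMB : (0:ℝ) ≤ M * (‖x‖ * (Sf.card : ℝ) ^ (1/q)) := mul_nonneg hM.le hB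
  have step := Real.rpow_le_rpow hxp.le key (by positivity : (0:ℝ) ≤ 1/p)
  have e1 : (‖x‖ ^ p) ^ (1/p) = ‖x‖ := by
    rw [← Real.rpow_mul hxpos.le, mul_one_div, div_self hp0.ne', Real.rpow_one]
  have e2 : ((Sg.card : ℝ) * (M * (‖x‖ * (Sf.card : ℝ) ^ (1/q))) ^ p) ^ (1/p)
      = (Sg.card : ℝ) ^ (1/p) * (M * (‖x‖ * (Sf.card : ℝ) ^ (1/q))) := by
    rw [Real.mul_rpow (Nat.cast_nonneg _) (Real.rpow_nonneg hMB _),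
      ← Real.rpow_mul hMB, mul_one_div, div_self hp0.ne', Real.rpow_one]
  rw [e1, e2] at step
  have h1 : 1 * ‖x‖ ≤ ((Sg.card : ℝ) ^ (1/p) * (Sf.card : ℝ) ^ (1/q) * M) * ‖x‖ := by
    calc 1 * ‖x‖ = ‖x‖ := one_mul _
      _ ≤ (Sg.card : ℝ) ^ (1/p) * (M * (‖x‖ * (Sf.card : ℝ) ^ (1/q))) := step
      _ = ((Sg.card : ℝ) ^ (1/p) * (Sf.card : ℝ) ^ (1/q) * M) * ‖x‖ := by ring
  have h2 := le_of_mul_le_mul_right h1 hxpos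
  rw [ge_iff_le, div_le_iff₀ hM]
  linarith [h2]
end

section
/- Let {τ_j}_{j=1}^n and {ω_k}_{k=1}^n be Parseval frames for a finite-dimensional Hilbert space H. Then for every nonzero h ∈ H, ‖θ_τ h‖_0 · ‖θ_ω h‖_0 ≥ 1 / max_{1≤j,k≤n} |⟨τ_j, ω_k⟩|², where θ_τ h = (⟨h, τ_j⟩)_{j=1}^n and θ_ω h = (⟨h, ω_k⟩)_{k=1}^n. -/
open Finset

-- Parseval frame reconstruction: expansion of inner 𝕂 products
lemma parseval_expand' {𝕂 : Type*} [RCLike 𝕂] {H : Type*} [NormedAddCommGroup H]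
    [InnerProductSpace 𝕂 H] [FiniteDimensional 𝕂 H]
    {n : ℕ} (ω : Fin n → H)
    (hω : ∀ h : H, ‖h‖ ^ 2 = ∑ k, ‖(inner 𝕂 h (ω k) : 𝕂)‖ ^ 2)
    (x g : H) :
    (inner 𝕂 x g : 𝕂) = ∑ k, (inner 𝕂 x (ω k) : 𝕂) * inner 𝕂 (ω k) g := by
  set T : H →ₗ[𝕂] H :=
    { toFun := fun y => ∑ k, (inner 𝕂 (ω k) y : 𝕂) • ω k
      map_add' := by intro a b; simp [inner_add_right, add_smul, Finset.sum_add_distrib]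
      map_smul' := by intro c a; simp [inner_smul_right, smul_smul, Finset.smul_sum] } with hT
  have hTapp : ∀ y : H, T y = ∑ k, (inner 𝕂 (ω k) y : 𝕂) • ω k := fun y => rfl
  have hsymm : (T - (LinearMap.id : H →ₗ[𝕂] H)).IsSymmetric := by
    intro a b
    simp only [LinearMap.sub_apply, LinearMap.id_apply, inner_sub_left, inner_sub_right, hTapp,
      sum_inner, inner_sum, inner_smul_left, inner_smul_right]
    congr 1
    refine Finset.sum_congr rfl fun k _ => ?_
    rw [← inner_conj_symm a (ω k)]
    ring
  have hzero : ∀ y : H, (inner 𝕂 ((T - (LinearMap.id : H →ₗ[𝕂] H)) y) y : 𝕂) = 0 := by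
    intro y
    simp only [LinearMap.sub_apply, LinearMap.id_apply, inner_sub_left, hTapp, sum_inner,
      inner_smul_left]
    have h1 : ∑ k, (starRingEnd 𝕂) (inner 𝕂 (ω k) y : 𝕂) * inner 𝕂 (ω k) y
        = ((‖y‖ ^ 2 : ℝ) : 𝕂) := by
      have h2 : ∀ k, (starRingEnd 𝕂) (inner 𝕂 (ω k) y : 𝕂) * inner 𝕂 (ω k) y
          = ((‖(inner 𝕂 y (ω k) : 𝕂)‖ ^ 2 : ℝ) : 𝕂) := by
        intro k
        rw [RCLike.conj_mul, ← norm_inner_symm y (ω k)]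
        push_cast; ring
      rw [Finset.sum_congr rfl fun k _ => h2 k, ← RCLike.ofReal_sum, ← hω y]
    rw [h1, inner_self_eq_norm_sq_to_K (𝕜 := 𝕂) y]
    push_cast; ring
  have hTid : T = LinearMap.id := by
    have := hsymm.inner_map_self_eq_zero.mp hzero
    rwa [sub_eq_zero] at this
  have hx : x = T x := by rw [hTid]; rfl
  conv_lhs => rw [hx, hTapp]
  rw [sum_inner]
  refine Finset.sum_congr rfl fun k _ => ?_
  rw [inner_smul_left, ← inner_conj_symm (ω k) x, RCLike.conj_conj]

theorem ricaud_torresani_uncertainty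
    {𝕂 : Type*} [RCLike 𝕂] {H : Type*} [NormedAddCommGroup H] [InnerProductSpace 𝕂 H]
    [FiniteDimensional 𝕂 H]
    {n : ℕ} (τ ω : Fin n → H)
    (hτ : ∀ h : H, ‖h‖ ^ 2 = ∑ j, ‖(inner 𝕂 h (τ j) : 𝕂)‖ ^ 2)
    (hω : ∀ h : H, ‖h‖ ^ 2 = ∑ k, ‖(inner 𝕂 h (ω k) : 𝕂)‖ ^ 2)
    (h : H) (hh : h ≠ 0) :
    ((univ.filter fun j => (inner 𝕂 h (τ j) : 𝕂) ≠ 0).card : ℝ) *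
      ((univ.filter fun k => (inner 𝕂 h (ω k) : 𝕂) ≠ 0).card : ℝ) ≥
      1 / (⨆ jk : Fin n × Fin n, ‖(inner 𝕂 (τ jk.1) (ω jk.2) : 𝕂)‖ ^ 2) := by
  set Sτ := univ.filter fun j => (inner 𝕂 h (τ j) : 𝕂) ≠ 0 with hSτ
  set Sω := univ.filter fun k => (inner 𝕂 h (ω k) : 𝕂) ≠ 0 with hSω
  set M := ⨆ jk : Fin n × Fin n, ‖(inner 𝕂 (τ jk.1) (ω jk.2) : 𝕂)‖ ^ 2 with hM
  have hpos : (0:ℝ) < ‖h‖ ^ 2 := by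
    have := norm_pos_iff.mpr hh; positivity
  rcases le_or_gt M 0 with hM0 | hM0
  · exact le_trans (div_nonpos_of_nonneg_of_nonpos zero_le_one hM0) (by positivity)
  rw [ge_iff_le, div_le_iff₀ hM0]
  have hne : Nonempty (Fin n × Fin n) := by
    rcases Nat.eq_zero_or_pos n with rfl | hn
    · rw [hτ h] at hpos; simp at hpos
    · exact ⟨⟨⟨0, hn⟩, ⟨0, hn⟩⟩⟩
  have hMle : ∀ j k : Fin n, ‖(inner 𝕂 (τ j) (ω k) : 𝕂)‖ ^ 2 ≤ M :=
    fun j k => le_ciSup (f := fun jk : Fin n × Fin n => ‖(inner 𝕂 (τ jk.1) (ω jk.2) : 𝕂)‖ ^ 2)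
      (Set.Finite.bddAbove (Set.finite_range _)) (⟨j, k⟩ : Fin n × Fin n)
  set s := Real.sqrt M with hs
  have hs2 : s ^ 2 = M := Real.sq_sqrt hM0.le
  have hsnn : 0 ≤ s := Real.sqrt_nonneg _
  have hbk : ∀ j k : Fin n, ‖(inner 𝕂 (ω k) (τ j) : 𝕂)‖ ≤ s := by
    intro j k
    have h1 := hMle j k
    rw [← norm_inner_symm (ω k) (τ j)] at h1
    nlinarith [norm_nonneg (inner 𝕂 (ω k) (τ j) : 𝕂)]
  have hsum2 : ∑ k ∈ Sω, ‖(inner 𝕂 h (ω k) : 𝕂)‖ ^ 2 ≤ ‖h‖ ^ 2 := by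
    rw [hω h]
    exact Finset.sum_le_sum_of_subset_of_nonneg (filter_subset _ _)
      (fun k _ _ => by positivity)
  have key : ∀ j : Fin n, ‖(inner 𝕂 h (τ j) : 𝕂)‖ ^ 2 ≤ M * Sω.card * ‖h‖ ^ 2 := by
    intro j
    have hexp := parseval_expand' ω hω h (τ j)
    have hfil : ∑ k ∈ Sω, (inner 𝕂 h (ω k) : 𝕂) * inner 𝕂 (ω k) (τ j)
        = ∑ k, (inner 𝕂 h (ω k) : 𝕂) * inner 𝕂 (ω k) (τ j) := by
      refine Finset.sum_filter_of_ne fun k _ hk => ?_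
      intro h0; apply hk; rw [h0, zero_mul]
    have hb : ‖(inner 𝕂 h (τ j) : 𝕂)‖ ≤ (∑ k ∈ Sω, ‖(inner 𝕂 h (ω k) : 𝕂)‖) * s := by
      rw [hexp, ← hfil]
      calc ‖∑ k ∈ Sω, (inner 𝕂 h (ω k) : 𝕂) * inner 𝕂 (ω k) (τ j)‖
          ≤ ∑ k ∈ Sω, ‖(inner 𝕂 h (ω k) : 𝕂) * inner 𝕂 (ω k) (τ j)‖ := norm_sum_le _ _
        _ ≤ ∑ k ∈ Sω, ‖(inner 𝕂 h (ω k) : 𝕂)‖ * s := by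
            refine Finset.sum_le_sum fun k _ => ?_
            rw [norm_mul]
            exact mul_le_mul_of_nonneg_left (hbk j k) (norm_nonneg _)
        _ = (∑ k ∈ Sω, ‖(inner 𝕂 h (ω k) : 𝕂)‖) * s := by rw [Finset.sum_mul]
    have hcs : (∑ k ∈ Sω, ‖(inner 𝕂 h (ω k) : 𝕂)‖) ^ 2
        ≤ (Sω.card : ℝ) * ∑ k ∈ Sω, ‖(inner 𝕂 h (ω k) : 𝕂)‖ ^ 2 :=
      sq_sum_le_card_mul_sum_sq
    have hsumnn : 0 ≤ ∑ k ∈ Sω, ‖(inner 𝕂 h (ω k) : 𝕂)‖ :=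
      Finset.sum_nonneg fun k _ => norm_nonneg _
    have hsq : ‖(inner 𝕂 h (τ j) : 𝕂)‖ ^ 2
        ≤ (∑ k ∈ Sω, ‖(inner 𝕂 h (ω k) : 𝕂)‖) ^ 2 * M := by
      rw [← hs2]
      nlinarith [norm_nonneg (inner 𝕂 h (τ j) : 𝕂)]
    calc ‖(inner 𝕂 h (τ j) : 𝕂)‖ ^ 2 ≤ (∑ k ∈ Sω, ‖(inner 𝕂 h (ω k) : 𝕂)‖) ^ 2 * M := hsq
      _ ≤ ((Sω.card : ℝ) * ∑ k ∈ Sω, ‖(inner 𝕂 h (ω k) : 𝕂)‖ ^ 2) * M := by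
          exact mul_le_mul_of_nonneg_right hcs hM0.le
      _ ≤ ((Sω.card : ℝ) * ‖h‖ ^ 2) * M := by
          refine mul_le_mul_of_nonneg_right ?_ hM0.le
          exact mul_le_mul_of_nonneg_left hsum2 (Nat.cast_nonneg _)
      _ = M * Sω.card * ‖h‖ ^ 2 := by ring
  have hmain : ‖h‖ ^ 2 ≤ (Sτ.card : ℝ) * (M * Sω.card * ‖h‖ ^ 2) := by
    have h1 : ‖h‖ ^ 2 = ∑ j ∈ Sτ, ‖(inner 𝕂 h (τ j) : 𝕂)‖ ^ 2 := by
      rw [hτ h]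
      refine (Finset.sum_filter_of_ne fun j _ hj => ?_).symm
      intro h0; apply hj; rw [h0]; simp
    calc ‖h‖ ^ 2 = ∑ j ∈ Sτ, ‖(inner 𝕂 h (τ j) : 𝕂)‖ ^ 2 := h1
      _ ≤ ∑ _j ∈ Sτ, M * Sω.card * ‖h‖ ^ 2 := Finset.sum_le_sum fun j _ => key j
      _ = (Sτ.card : ℝ) * (M * Sω.card * ‖h‖ ^ 2) := by
          rw [Finset.sum_const, nsmul_eq_mul]
  nlinarith [hmain, hpos, Nat.cast_nonneg (α := ℝ) Sτ.card, Nat.cast_nonneg (α := ℝ) Sω.card]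
end

section
/- Let {τ_j}_{j=1}^n and {ω_k}_{k=1}^n be Parseval frames for a finite-dimensional Hilbert space H. Then for every nonzero h ∈ H, ((‖θ_τ h‖_0 + ‖θ_ω h‖_0)/2)² ≥ 1 / max_{1≤j,k≤n} |⟨τ_j, ω_k⟩|². -/
open Finset

theorem ricaud_torresani_uncertainty_sum
    {𝕂 : Type*} [RCLike 𝕂] {H : Type*} [NormedAddCommGroup H] [InnerProductSpace 𝕂 H]
    [FiniteDimensional 𝕂 H]
    {n : ℕ} (τ ω : Fin n → H)
    (hτ : ∀ h : H, ‖h‖ ^ 2 = ∑ j, ‖(inner 𝕂 h (τ j) : 𝕂)‖ ^ 2)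
    (hω : ∀ h : H, ‖h‖ ^ 2 = ∑ k, ‖(inner 𝕂 h (ω k) : 𝕂)‖ ^ 2)
    (h : H) (hh : h ≠ 0) :
    ((((univ.filter fun j => (inner 𝕂 h (τ j) : 𝕂) ≠ 0).card : ℝ) +
      ((univ.filter fun k => (inner 𝕂 h (ω k) : 𝕂) ≠ 0).card : ℝ)) / 2) ^ 2 ≥
      1 / (⨆ jk : Fin n × Fin n, ‖(inner 𝕂 (τ jk.1) (ω jk.2) : 𝕂)‖ ^ 2) := by
  classical
  -- the frame operator
  set S : H →ₗ[𝕂] H :=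
    { toFun := fun x => ∑ j, (inner 𝕂 (τ j) x : 𝕂) • τ j
      map_add' := by
        intro x y
        simp [inner_add_right, add_smul, Finset.sum_add_distrib]
      map_smul' := by
        intro c x
        simp [inner_smul_right, smul_smul, Finset.smul_sum] } with hSdef
  have hSapply : ∀ x : H, S x = ∑ j, (inner 𝕂 (τ j) x : 𝕂) • τ j := fun x => rfl
  have hSsym : (S - LinearMap.id).IsSymmetric := by
    intro x y
    simp only [LinearMap.sub_apply, LinearMap.id_apply, inner_sub_left, inner_sub_right,
      hSapply, sum_inner, inner_sum, inner_smul_left, inner_smul_right]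
    congr 1
    refine Finset.sum_congr rfl fun j _ => ?_
    rw [← inner_conj_symm x (τ j)]
    ring
  have hSzero : S - LinearMap.id = 0 := by
    rw [← hSsym.inner_map_self_eq_zero]
    intro x
    have h1 : (inner 𝕂 (S x) x : 𝕂) = inner 𝕂 x x := by
      rw [hSapply, sum_inner]
      simp only [inner_smul_left]
      have e1 : ∀ j, (starRingEnd 𝕂) (inner 𝕂 (τ j) x) * inner 𝕂 (τ j) x
          = ((‖(inner 𝕂 x (τ j) : 𝕂)‖ ^ 2 : ℝ) : 𝕂) := by
        intro j
        rw [RCLike.conj_mul, norm_inner_symm]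
        push_cast
        ring
      rw [Finset.sum_congr rfl fun j _ => e1 j, inner_self_eq_norm_sq_to_K,
        ← RCLike.ofReal_sum, ← hτ x]
      push_cast
      ring
    simp only [LinearMap.sub_apply, LinearMap.id_apply, inner_sub_left, h1, sub_self]
  have hrecon : ∀ x y : H, (inner 𝕂 x y : 𝕂) = ∑ j, (inner 𝕂 x (τ j) : 𝕂) * inner 𝕂 (τ j) y := by
    intro x y
    have : S y = y := by
      have := LinearMap.ext_iff.1 hSzero y
      simpa [sub_eq_zero] using this
    conv_lhs => rw [← this, hSapply]
    simp [inner_sum, inner_smul_right, mul_comm]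
  set M : ℝ := ⨆ jk : Fin n × Fin n, ‖(inner 𝕂 (τ jk.1) (ω jk.2) : 𝕂)‖ ^ 2 with hM
  set T : Finset (Fin n) := univ.filter fun j => (inner 𝕂 h (τ j) : 𝕂) ≠ 0 with hT
  set W : Finset (Fin n) := univ.filter fun k => (inner 𝕂 h (ω k) : 𝕂) ≠ 0 with hW
  set a : ℝ := (T.card : ℝ)
  set b : ℝ := (W.card : ℝ)
  have ha0 : 0 ≤ a := Nat.cast_nonneg _
  have hb0 : 0 ≤ b := Nat.cast_nonneg _
  have hnorm : 0 < ‖h‖ ^ 2 := by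
    have := norm_pos_iff.mpr hh
    positivity
  have hMle : ∀ j k : Fin n, ‖(inner 𝕂 (τ j) (ω k) : 𝕂)‖ ^ 2 ≤ M := by
    intro j k
    rw [hM]
    exact le_ciSup (f := fun jk : Fin n × Fin n => ‖(inner 𝕂 (τ jk.1) (ω jk.2) : 𝕂)‖ ^ 2)
      (Set.Finite.bddAbove (Set.finite_range _)) (j, k)
  -- key estimate for each k
  have hkey : ∀ k : Fin n, ‖(inner 𝕂 h (ω k) : 𝕂)‖ ^ 2 ≤ ‖h‖ ^ 2 * (a * M) := by
    intro k
    have h1 : ‖(inner 𝕂 h (ω k) : 𝕂)‖ ≤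
        ∑ j ∈ T, ‖(inner 𝕂 h (τ j) : 𝕂)‖ * ‖(inner 𝕂 (τ j) (ω k) : 𝕂)‖ := by
      rw [hrecon h (ω k)]
      calc ‖∑ j, (inner 𝕂 h (τ j) : 𝕂) * inner 𝕂 (τ j) (ω k)‖
          = ‖∑ j ∈ T, (inner 𝕂 h (τ j) : 𝕂) * inner 𝕂 (τ j) (ω k)‖ := by
            congr 1
            symm
            apply Finset.sum_filter_of_ne
            intro j _ hne hz
            exact hne (by simp [hz])
        _ ≤ ∑ j ∈ T, ‖(inner 𝕂 h (τ j) : 𝕂) * inner 𝕂 (τ j) (ω k)‖ := norm_sum_le _ _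
        _ = ∑ j ∈ T, ‖(inner 𝕂 h (τ j) : 𝕂)‖ * ‖(inner 𝕂 (τ j) (ω k) : 𝕂)‖ := by
            simp [norm_mul]
    have h2 : (∑ j ∈ T, ‖(inner 𝕂 h (τ j) : 𝕂)‖ * ‖(inner 𝕂 (τ j) (ω k) : 𝕂)‖) ^ 2 ≤
        (∑ j ∈ T, ‖(inner 𝕂 h (τ j) : 𝕂)‖ ^ 2) * ∑ j ∈ T, ‖(inner 𝕂 (τ j) (ω k) : 𝕂)‖ ^ 2 :=
      Finset.sum_mul_sq_le_sq_mul_sq _ _ _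
    have h3 : (∑ j ∈ T, ‖(inner 𝕂 h (τ j) : 𝕂)‖ ^ 2) ≤ ‖h‖ ^ 2 := by
      rw [hτ h]
      exact Finset.sum_le_sum_of_subset_of_nonneg (Finset.filter_subset _ _)
        (fun _ _ _ => by positivity)
    have h4 : (∑ j ∈ T, ‖(inner 𝕂 (τ j) (ω k) : 𝕂)‖ ^ 2) ≤ a * M := by
      calc (∑ j ∈ T, ‖(inner 𝕂 (τ j) (ω k) : 𝕂)‖ ^ 2) ≤ ∑ _j ∈ T, M :=
            Finset.sum_le_sum fun j _ => hMle j k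
        _ = a * M := by simp [a, mul_comm]
    have h5 : 0 ≤ ∑ j ∈ T, ‖(inner 𝕂 h (τ j) : 𝕂)‖ * ‖(inner 𝕂 (τ j) (ω k) : 𝕂)‖ :=
      Finset.sum_nonneg fun j _ => by positivity
    calc ‖(inner 𝕂 h (ω k) : 𝕂)‖ ^ 2
        ≤ (∑ j ∈ T, ‖(inner 𝕂 h (τ j) : 𝕂)‖ * ‖(inner 𝕂 (τ j) (ω k) : 𝕂)‖) ^ 2 := by
          apply pow_le_pow_left₀ (norm_nonneg _) h1
      _ ≤ (∑ j ∈ T, ‖(inner 𝕂 h (τ j) : 𝕂)‖ ^ 2) * ∑ j ∈ T, ‖(inner 𝕂 (τ j) (ω k) : 𝕂)‖ ^ 2 := h2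
      _ ≤ ‖h‖ ^ 2 * (a * M) := by
          apply mul_le_mul h3 h4 (Finset.sum_nonneg fun j _ => by positivity) (le_of_lt hnorm)
  have hmain : ‖h‖ ^ 2 ≤ b * (‖h‖ ^ 2 * (a * M)) := by
    calc ‖h‖ ^ 2 = ∑ k, ‖(inner 𝕂 h (ω k) : 𝕂)‖ ^ 2 := hω h
      _ = ∑ k ∈ W, ‖(inner 𝕂 h (ω k) : 𝕂)‖ ^ 2 := by
          symm
          apply Finset.sum_filter_of_ne
          intro k _ hne hz
          exact hne (by simp [hz])
      _ ≤ ∑ _k ∈ W, ‖h‖ ^ 2 * (a * M) := Finset.sum_le_sum fun k _ => hkey k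
      _ = b * (‖h‖ ^ 2 * (a * M)) := by simp [b, mul_comm]
  have habM : 1 ≤ a * b * M :=
    le_of_mul_le_mul_right (by nlinarith [hmain]) hnorm
  have hMpos : 0 < M := by nlinarith [habM, mul_nonneg ha0 hb0]
  rw [ge_iff_le, div_le_iff₀ hMpos]
  nlinarith [sq_nonneg (a - b), habM, hMpos]
end

section
/- Let {τ_j}_{j=1}^n and {ω_k}_{k=1}^n be orthonormal bases for a finite-dimensional Hilbert space H. Then for every nonzero h ∈ H, ‖θ_τ h‖_0 · ‖θ_ω h‖_0 ≥ 1 / max_{1≤j,k≤n} |⟨τ_j, ω_k⟩|², where θ_τ h = (⟨h, τ_j⟩)_j and θ_ω h = (⟨h, ω_k⟩)_k. -/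
open Finset

theorem elad_bruckstein_uncertainty
    {𝕂 : Type*} [RCLike 𝕂] {H : Type*} [NormedAddCommGroup H] [InnerProductSpace 𝕂 H]
    [FiniteDimensional 𝕂 H]
    {n : ℕ} (τ ω : OrthonormalBasis (Fin n) 𝕂 H)
    (h : H) (hh : h ≠ 0) :
    ((univ.filter fun j => (inner 𝕂 h (τ j) : 𝕂) ≠ 0).card : ℝ) *
      ((univ.filter fun k => (inner 𝕂 h (ω k) : 𝕂) ≠ 0).card : ℝ) ≥
      1 / (⨆ jk : Fin n × Fin n, ‖(inner 𝕂 (τ jk.1) (ω jk.2) : 𝕂)‖ ^ 2) := by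
  -- n ≠ 0
  rcases Nat.eq_zero_or_pos n with hn | hn
  · exfalso; apply hh
    subst hn
    simpa using (τ.sum_repr h).symm
  set S := univ.filter fun j => (inner 𝕂 h (τ j) : 𝕂) ≠ 0 with hSdef
  set T := univ.filter fun k => (inner 𝕂 h (ω k) : 𝕂) ≠ 0 with hTdef
  set M := ⨆ jk : Fin n × Fin n, ‖(inner 𝕂 (τ jk.1) (ω jk.2) : 𝕂)‖ ^ 2 with hMdef
  have hM_le : ∀ j k : Fin n, ‖(inner 𝕂 (τ j) (ω k) : 𝕂)‖ ^ 2 ≤ M := fun j k =>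
    le_ciSup (f := fun jk : Fin n × Fin n => ‖(inner 𝕂 (τ jk.1) (ω jk.2) : 𝕂)‖ ^ 2)
      (Set.Finite.bddAbove (Set.finite_range _)) (j, k)
  have j0 : Fin n := ⟨0, hn⟩
  have hM0 : 0 ≤ M := le_trans (sq_nonneg _) (hM_le j0 j0)
  have hsqrt : ∀ j k : Fin n, ‖(inner 𝕂 (τ j) (ω k) : 𝕂)‖ ≤ Real.sqrt M := by
    intro j k
    rw [show ‖(inner 𝕂 (τ j) (ω k) : 𝕂)‖ = Real.sqrt (‖(inner 𝕂 (τ j) (ω k) : 𝕂)‖ ^ 2) from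
      (Real.sqrt_sq (norm_nonneg _)).symm]
    exact Real.sqrt_le_sqrt (hM_le j k)
  -- Parseval for τ
  have parseval_tau : ∑ j, ‖(inner 𝕂 h (τ j) : 𝕂)‖ ^ 2 = ‖h‖ ^ 2 := by
    have h1 : ‖τ.repr h‖ = ‖h‖ := τ.repr.norm_map h
    have h2 : ‖τ.repr h‖ ^ 2 = ∑ j, ‖τ.repr h j‖ ^ 2 := by
      rw [EuclideanSpace.norm_eq, Real.sq_sqrt]
      positivity
    rw [← h1, h2]
    refine Finset.sum_congr rfl fun j _ => ?_
    rw [τ.repr_apply_apply, ← norm_inner_symm]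
  have parseval_omega : ∑ k, ‖(inner 𝕂 h (ω k) : 𝕂)‖ ^ 2 = ‖h‖ ^ 2 := by
    have h1 : ‖ω.repr h‖ = ‖h‖ := ω.repr.norm_map h
    have h2 : ‖ω.repr h‖ ^ 2 = ∑ k, ‖ω.repr h k‖ ^ 2 := by
      rw [EuclideanSpace.norm_eq, Real.sq_sqrt]
      positivity
    rw [← h1, h2]
    refine Finset.sum_congr rfl fun k _ => ?_
    rw [ω.repr_apply_apply, ← norm_inner_symm]
  -- expansion
  have expand : ∀ k : Fin n, (inner 𝕂 h (ω k) : 𝕂) =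
      ∑ j, (inner 𝕂 h (τ j) : 𝕂) * (inner 𝕂 (τ j) (ω k) : 𝕂) := by
    intro k
    conv_lhs => rw [← τ.sum_repr (ω k)]
    rw [inner_sum]
    refine Finset.sum_congr rfl fun j _ => ?_
    rw [inner_smul_right, τ.repr_apply_apply, mul_comm]
  -- step A
  have stepA : ∀ k : Fin n, ‖(inner 𝕂 h (ω k) : 𝕂)‖ ≤
      Real.sqrt M * ∑ j ∈ S, ‖(inner 𝕂 h (τ j) : 𝕂)‖ := by
    intro k
    have e1 : (inner 𝕂 h (ω k) : 𝕂) = ∑ j ∈ S, (inner 𝕂 h (τ j) : 𝕂) * (inner 𝕂 (τ j) (ω k) : 𝕂) := by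
      rw [expand k, hSdef]
      exact (Finset.sum_filter_of_ne fun j _ hj => left_ne_zero_of_mul hj).symm
    calc ‖(inner 𝕂 h (ω k) : 𝕂)‖
        ≤ ∑ j ∈ S, ‖(inner 𝕂 h (τ j) : 𝕂) * (inner 𝕂 (τ j) (ω k) : 𝕂)‖ := by
          rw [e1]; exact norm_sum_le _ _
      _ ≤ ∑ j ∈ S, ‖(inner 𝕂 h (τ j) : 𝕂)‖ * Real.sqrt M := by
          refine Finset.sum_le_sum fun j _ => ?_
          rw [norm_mul]
          exact mul_le_mul_of_nonneg_left (hsqrt j k) (norm_nonneg _)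
      _ = Real.sqrt M * ∑ j ∈ S, ‖(inner 𝕂 h (τ j) : 𝕂)‖ := by
          rw [← Finset.sum_mul, mul_comm]
  -- step B : Cauchy-Schwarz on S
  have stepB : (∑ j ∈ S, ‖(inner 𝕂 h (τ j) : 𝕂)‖) ^ 2 ≤ (S.card : ℝ) * ‖h‖ ^ 2 := by
    calc (∑ j ∈ S, ‖(inner 𝕂 h (τ j) : 𝕂)‖) ^ 2
        ≤ (S.card : ℝ) * ∑ j ∈ S, ‖(inner 𝕂 h (τ j) : 𝕂)‖ ^ 2 :=
          sq_sum_le_card_mul_sum_sq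
      _ ≤ (S.card : ℝ) * ∑ j, ‖(inner 𝕂 h (τ j) : 𝕂)‖ ^ 2 := by
          refine mul_le_mul_of_nonneg_left ?_ (Nat.cast_nonneg _)
          exact Finset.sum_le_sum_of_subset_of_nonneg (Finset.filter_subset _ _)
            fun j _ _ => sq_nonneg _
      _ = (S.card : ℝ) * ‖h‖ ^ 2 := by rw [parseval_tau]
  -- step C
  have hnorm : ∑ k, ‖(inner 𝕂 h (ω k) : 𝕂)‖ ^ 2 = ∑ k ∈ T, ‖(inner 𝕂 h (ω k) : 𝕂)‖ ^ 2 := by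
    rw [hTdef]
    exact (Finset.sum_filter_of_ne fun k _ hk => by
      intro h0; exact hk (by rw [h0, norm_zero]; ring)).symm
  have key : ‖h‖ ^ 2 ≤ (T.card : ℝ) * (M * ((S.card : ℝ) * ‖h‖ ^ 2)) := by
    calc ‖h‖ ^ 2 = ∑ k ∈ T, ‖(inner 𝕂 h (ω k) : 𝕂)‖ ^ 2 := by rw [← parseval_omega, hnorm]
      _ ≤ ∑ _k ∈ T, M * ((S.card : ℝ) * ‖h‖ ^ 2) := by
          refine Finset.sum_le_sum fun k _ => ?_
          calc ‖(inner 𝕂 h (ω k) : 𝕂)‖ ^ 2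
              ≤ (Real.sqrt M * ∑ j ∈ S, ‖(inner 𝕂 h (τ j) : 𝕂)‖) ^ 2 := by
                refine pow_le_pow_left₀ (norm_nonneg _) (stepA k) 2
            _ = M * (∑ j ∈ S, ‖(inner 𝕂 h (τ j) : 𝕂)‖) ^ 2 := by
                rw [mul_pow, Real.sq_sqrt hM0]
            _ ≤ M * ((S.card : ℝ) * ‖h‖ ^ 2) :=
                mul_le_mul_of_nonneg_left stepB hM0
      _ = (T.card : ℝ) * (M * ((S.card : ℝ) * ‖h‖ ^ 2)) := by
          rw [Finset.sum_const, nsmul_eq_mul]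
  have hh2 : (0 : ℝ) < ‖h‖ ^ 2 := pow_pos (norm_pos_iff.mpr hh) 2
  have one_le : 1 ≤ (S.card : ℝ) * (T.card : ℝ) * M := by
    have := key
    rw [show (T.card : ℝ) * (M * ((S.card : ℝ) * ‖h‖ ^ 2))
        = ((S.card : ℝ) * (T.card : ℝ) * M) * ‖h‖ ^ 2 by ring] at this
    nlinarith
  have hMpos : 0 < M := by
    rcases hM0.lt_or_eq with h' | h'
    · exact h'
    · exfalso; rw [← h'] at one_le; simp at one_le; linarith
  rw [ge_iff_le, div_le_iff₀ hMpos]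
  linarith
end

section
/- For every d ∈ ℕ and every nonzero h ∈ ℂ^d, ‖h‖_0 · ‖ĥ‖_0 ≥ d, where ĥ denotes the discrete Fourier transform of h and ‖·‖_0 counts nonzero entries. -/
open Finset Complex

lemma sum_exp_orth (d : ℕ) (hd : 0 < d) (j j' : Fin d) :
    ∑ k : Fin d, Complex.exp (2 * (Real.pi : ℂ) * Complex.I * ((j.1 : ℂ) - (j'.1 : ℂ)) * (k.1 : ℂ) / (d : ℂ))
      = if j = j' then (d : ℂ) else 0 := by
  have hdC : (d : ℂ) ≠ 0 := Nat.cast_ne_zero.mpr hd.ne'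
  set m : ℤ := (j.1 : ℤ) - (j'.1 : ℤ) with hm
  have hmc : ((j.1 : ℂ) - (j'.1 : ℂ)) = (m : ℂ) := by push_cast [hm]; ring
  set c : ℂ := 2 * (Real.pi : ℂ) * Complex.I * ((j.1 : ℂ) - (j'.1 : ℂ)) / (d : ℂ) with hc
  have hterm : ∀ k : Fin d,
      Complex.exp (2 * (Real.pi : ℂ) * Complex.I * ((j.1 : ℂ) - (j'.1 : ℂ)) * (k.1 : ℂ) / (d : ℂ))
        = (Complex.exp c) ^ (k.1) := by
    intro k
    rw [← Complex.exp_nat_mul, hc]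
    ring_nf
  rw [Fintype.sum_congr _ _ hterm]
  rw [Fin.sum_univ_eq_sum_range (fun i => Complex.exp c ^ i) d]
  by_cases hjj : j = j'
  · subst hjj
    simp [hc]
  · have hm0 : m ≠ 0 := by
      intro hcon
      apply hjj
      have := sub_eq_zero.mp hcon
      exact Fin.ext (by omega)
    have hz1 : Complex.exp c ≠ 1 := by
      intro hcon
      rw [Complex.exp_eq_one_iff] at hcon
      obtain ⟨n, hn⟩ := hcon
      rw [hc, hmc] at hn
      have h2 : (2 : ℂ) * Real.pi * Complex.I ≠ 0 := by
        simp [Real.pi_ne_zero, Complex.I_ne_zero]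
      have hmnd : (m : ℂ) = (n : ℂ) * (d : ℂ) := by
        field_simp at hn
        exact mul_left_cancel₀ h2 (by linear_combination (2 * (Real.pi : ℂ) * Complex.I) * hn)
      have hmnd' : m = n * d := by exact_mod_cast hmnd
      have hj := j.2
      have hj' := j'.2
      have habs : m.natAbs < d := by omega
      have hpos : 0 < m.natAbs := by omega
      have hdvd : d ∣ m.natAbs := by
        have hD : (d : ℤ) ∣ m := ⟨n, by rw [hmnd', mul_comm]⟩
        simpa using Int.natAbs_dvd_natAbs.mpr hD
      have := Nat.le_of_dvd hpos hdvd
      omega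
    have hzd : (Complex.exp c) ^ d = 1 := by
      rw [← Complex.exp_nat_mul, hc, hmc]
      have : (d : ℂ) * (2 * (Real.pi : ℂ) * Complex.I * (m : ℂ) / (d : ℂ))
          = (m : ℂ) * (2 * (Real.pi : ℂ) * Complex.I) := by
        field_simp
      rw [this, Complex.exp_int_mul_two_pi_mul_I]
    rw [geom_sum_eq hz1, hzd]
    simp [hjj]

lemma dft_inversion (d : ℕ) (hd : 0 < d) (h : Fin d → ℂ) (j : Fin d) :
    (d : ℂ) * h j = ∑ k : Fin d,
      (∑ j' : Fin d, h j' *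
        Complex.exp (-2 * (Real.pi : ℂ) * Complex.I * (j'.1 : ℂ) * (k.1 : ℂ) / (d : ℂ))) *
      Complex.exp (2 * (Real.pi : ℂ) * Complex.I * (j.1 : ℂ) * (k.1 : ℂ) / (d : ℂ)) := by
  have step : ∀ k : Fin d,
      (∑ j' : Fin d, h j' *
        Complex.exp (-2 * (Real.pi : ℂ) * Complex.I * (j'.1 : ℂ) * (k.1 : ℂ) / (d : ℂ))) *
      Complex.exp (2 * (Real.pi : ℂ) * Complex.I * (j.1 : ℂ) * (k.1 : ℂ) / (d : ℂ))
      = ∑ j' : Fin d, h j' *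
          Complex.exp (2 * (Real.pi : ℂ) * Complex.I * ((j.1 : ℂ) - (j'.1 : ℂ)) * (k.1 : ℂ) / (d : ℂ)) := by
    intro k
    rw [Finset.sum_mul]
    refine Finset.sum_congr rfl fun j' _ => ?_
    rw [mul_assoc, ← Complex.exp_add]
    rw [← add_div]
    congr 2
    ring
  rw [Fintype.sum_congr _ _ step, Finset.sum_comm]
  have : ∀ j' : Fin d,
      ∑ k : Fin d, h j' *
        Complex.exp (2 * (Real.pi : ℂ) * Complex.I * ((j.1 : ℂ) - (j'.1 : ℂ)) * (k.1 : ℂ) / (d : ℂ))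
      = h j' * (if j = j' then (d : ℂ) else 0) := by
    intro j'
    rw [← Finset.mul_sum, sum_exp_orth d hd j j']
  rw [Fintype.sum_congr _ _ this]
  simp [mul_comm]

lemma abs_exp_unit (r : ℝ) : ‖Complex.exp ((r : ℂ) * Complex.I)‖ = 1 :=
  Complex.norm_exp_ofReal_mul_I r

theorem donoho_stark_uncertainty (d : ℕ) (h : Fin d → ℂ) (hh : h ≠ 0) :
    d ≤ (univ.filter fun j : Fin d => h j ≠ 0).card *
      (univ.filter fun k : Fin d =>
        (∑ j : Fin d, h j *
          Complex.exp (-2 * (Real.pi : ℂ) * Complex.I * (j.1 : ℂ) * (k.1 : ℂ) / (d : ℂ))) ≠ 0).card := by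
  have hd : 0 < d := by
    rcases Nat.eq_zero_or_pos d with h0 | h0
    · exact absurd (funext fun x => (h0 ▸ x).elim0) hh
    · exact h0
  set g : Fin d → ℂ := fun k => ∑ j : Fin d, h j *
      Complex.exp (-2 * (Real.pi : ℂ) * Complex.I * (j.1 : ℂ) * (k.1 : ℂ) / (d : ℂ)) with hg
  set T := (univ.filter fun j : Fin d => h j ≠ 0) with hT
  set W := (univ.filter fun k : Fin d => g k ≠ 0) with hW
  -- max element
  obtain ⟨j0, -, hj0⟩ := Finset.exists_max_image (univ : Finset (Fin d))
    (fun j => ‖h j‖) ⟨⟨0, hd⟩, mem_univ _⟩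
  set M := ‖h j0‖ with hM
  have hMpos : 0 < M := by
    obtain ⟨j1, hj1⟩ := Function.ne_iff.mp hh
    have : 0 < ‖h j1‖ := by
      simpa using (norm_pos_iff.mpr (by simpa using hj1))
    exact lt_of_lt_of_le this (hj0 j1 (mem_univ _))
  -- each |h j * exp| = |h j|, each exp factor has abs 1
  have habs1 : ∀ (a b : ℕ), ‖Complex.exp (-2 * (Real.pi : ℂ) * Complex.I * (a : ℂ) * (b : ℂ) / (d : ℂ))‖ = 1 := by
    intro a b
    have : -2 * (Real.pi : ℂ) * Complex.I * (a : ℂ) * (b : ℂ) / (d : ℂ)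
        = ((-2 * Real.pi * a * b / d : ℝ) : ℂ) * Complex.I := by
      push_cast
      ring
    rw [this, Complex.norm_exp_ofReal_mul_I]
  -- bound on g
  have hgbound : ∀ k : Fin d, ‖g k‖ ≤ T.card * M := by
    intro k
    calc ‖g k‖ ≤ ∑ j : Fin d, ‖h j *
          Complex.exp (-2 * (Real.pi : ℂ) * Complex.I * (j.1 : ℂ) * (k.1 : ℂ) / (d : ℂ))‖ := by
          exact norm_sum_le _ _
      _ = ∑ j : Fin d, ‖h j‖ := by
          refine Finset.sum_congr rfl fun j _ => ?_
          rw [norm_mul, habs1 j.1 k.1, mul_one]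
      _ = ∑ j ∈ T, ‖h j‖ := by
          symm
          apply Finset.sum_subset (Finset.filter_subset _ _)
          intro x _ hx
          simp only [hT, mem_filter, mem_univ, true_and, not_not] at hx
          simp [hx]
      _ ≤ ∑ j ∈ T, M := Finset.sum_le_sum fun j _ => hj0 j (mem_univ _)
      _ = T.card * M := by rw [Finset.sum_const, nsmul_eq_mul]
  -- inversion bound
  have hinv := dft_inversion d hd h j0
  have key : (d : ℝ) * M ≤ (T.card * W.card : ℝ) * M := by
    have h1 : (d : ℝ) * M = ‖(d : ℂ) * h j0‖ := by
      rw [norm_mul, Complex.norm_natCast]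
    rw [h1, hinv]
    calc ‖∑ k : Fin d, g k *
          Complex.exp (2 * (Real.pi : ℂ) * Complex.I * (j0.1 : ℂ) * (k.1 : ℂ) / (d : ℂ))‖
        ≤ ∑ k : Fin d, ‖g k *
          Complex.exp (2 * (Real.pi : ℂ) * Complex.I * (j0.1 : ℂ) * (k.1 : ℂ) / (d : ℂ))‖ :=
          norm_sum_le _ _
      _ = ∑ k : Fin d, ‖g k‖ := by
          refine Finset.sum_congr rfl fun k _ => ?_
          rw [norm_mul]
          have : ‖Complex.exp (2 * (Real.pi : ℂ) * Complex.I * (j0.1 : ℂ) * (k.1 : ℂ) / (d : ℂ))‖ = 1 := by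
            have h2 : 2 * (Real.pi : ℂ) * Complex.I * (j0.1 : ℂ) * (k.1 : ℂ) / (d : ℂ)
                = ((2 * Real.pi * j0.1 * k.1 / d : ℝ) : ℂ) * Complex.I := by
              push_cast
              ring
            rw [h2, Complex.norm_exp_ofReal_mul_I]
          rw [this, mul_one]
      _ = ∑ k ∈ W, ‖g k‖ := by
          symm
          apply Finset.sum_subset (Finset.filter_subset _ _)
          intro x _ hx
          simp only [hW, mem_filter, mem_univ, true_and, not_not] at hx
          simp [hx]
      _ ≤ ∑ k ∈ W, (T.card : ℝ) * M := Finset.sum_le_sum fun k _ => hgbound k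
      _ = (W.card : ℝ) * ((T.card : ℝ) * M) := by rw [Finset.sum_const, nsmul_eq_mul]
      _ = (T.card * W.card : ℝ) * M := by ring
  have := (mul_le_mul_iff_of_pos_right hMpos).mp key
  exact_mod_cast this
end

section
/- For every d ∈ ℕ and every nonzero h ∈ ℂ^d, ((‖h‖_0 + ‖ĥ‖_0)/2)² ≥ d, equivalently ‖h‖_0 + ‖ĥ‖_0 ≥ 2√d, where ĥ is the discrete Fourier transform of h. -/
open Finset Complex

private noncomputable def Fdef (d : ℕ) (h : Fin d → ℂ) (k : Fin d) : ℂ :=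
  ∑ j : Fin d, h j *
    Complex.exp (-2 * (Real.pi : ℂ) * Complex.I * (j.1 : ℂ) * (k.1 : ℂ) / (d : ℂ))

private lemma orth_sum (d : ℕ) (hd : 0 < d) (m : ℤ) :
    ∑ k : Fin d, Complex.exp (2 * (Real.pi : ℂ) * Complex.I * (m : ℂ) * (k.1 : ℂ) / (d : ℂ)) =
      if (d : ℤ) ∣ m then (d : ℂ) else 0 := by
  have hdc : (d : ℂ) ≠ 0 := Nat.cast_ne_zero.mpr hd.ne'
  set x : ℂ := Complex.exp (2 * (Real.pi : ℂ) * Complex.I * (m : ℂ) / (d : ℂ)) with hx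
  have hpow : ∀ k : ℕ, Complex.exp (2 * (Real.pi : ℂ) * Complex.I * (m : ℂ) * (k : ℂ) / (d : ℂ)) = x ^ k := by
    intro k
    rw [hx, ← Complex.exp_nat_mul]
    congr 1
    ring
  have hsum : ∑ k : Fin d, Complex.exp (2 * (Real.pi : ℂ) * Complex.I * (m : ℂ) * (k.1 : ℂ) / (d : ℂ))
      = ∑ k ∈ Finset.range d, x ^ k := by
    rw [Fin.sum_univ_eq_sum_range (fun k : ℕ => Complex.exp (2 * (Real.pi : ℂ) * Complex.I * (m : ℂ) * (k : ℂ) / (d : ℂ)))]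
    exact Finset.sum_congr rfl fun k _ => hpow k
  rw [hsum]
  by_cases hdvd : (d : ℤ) ∣ m
  · obtain ⟨n, rfl⟩ := hdvd
    have hx1 : x = 1 := by
      rw [hx]
      have harg : (2 * (Real.pi : ℂ) * Complex.I * (((d : ℤ) * n : ℤ) : ℂ) / (d : ℂ))
          = (n : ℤ) * (2 * (Real.pi : ℝ) * Complex.I) := by
        push_cast
        field_simp
      rw [harg, Complex.exp_int_mul_two_pi_mul_I]
    simp [hx1]
  · have hxd : x ^ d = 1 := by
      rw [hx, ← Complex.exp_nat_mul]
      have harg : (d : ℂ) * (2 * (Real.pi : ℂ) * Complex.I * (m : ℂ) / (d : ℂ))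
          = m * (2 * (Real.pi : ℝ) * Complex.I) := by
        field_simp
      rw [harg, Complex.exp_int_mul_two_pi_mul_I]
    have hx1 : x ≠ 1 := by
      intro hx1
      rw [hx, Complex.exp_eq_one_iff] at hx1
      obtain ⟨n, hn⟩ := hx1
      apply hdvd
      refine ⟨n, ?_⟩
      have h2 : (2 * (Real.pi : ℂ) * Complex.I) ≠ 0 := by
        simp [Real.pi_ne_zero, Complex.I_ne_zero]
      have key : (m : ℂ) = (n : ℂ) * (d : ℂ) := by
        apply mul_left_cancel₀ h2
        field_simp at hn
        push_cast at hn ⊢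
        linear_combination (2 * (Real.pi : ℂ) * Complex.I) * hn
      have hmc : (m : ℂ) = (((d : ℤ) * n : ℤ) : ℂ) := by push_cast; linear_combination key
      exact_mod_cast hmc
    rw [geom_sum_eq hx1, hxd, if_neg hdvd]
    simp

private lemma inv_formula (d : ℕ) (hd : 0 < d) (h : Fin d → ℂ) (j0 : Fin d) :
    ∑ k : Fin d, Fdef d h k *
      Complex.exp (2 * (Real.pi : ℂ) * Complex.I * (j0.1 : ℂ) * (k.1 : ℂ) / (d : ℂ))
      = (d : ℂ) * h j0 := by
  calc ∑ k : Fin d, Fdef d h k *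
      Complex.exp (2 * (Real.pi : ℂ) * Complex.I * (j0.1 : ℂ) * (k.1 : ℂ) / (d : ℂ))
      = ∑ k : Fin d, ∑ j : Fin d, h j *
          Complex.exp (2 * (Real.pi : ℂ) * Complex.I * ((((j0.1 : ℤ) - (j.1 : ℤ)) : ℤ) : ℂ) * (k.1 : ℂ) / (d : ℂ)) := by
        refine Finset.sum_congr rfl fun k _ => ?_
        rw [Fdef, Finset.sum_mul]
        refine Finset.sum_congr rfl fun j _ => ?_
        rw [mul_assoc, ← Complex.exp_add]
        congr 1
        push_cast
        ring
    _ = ∑ j : Fin d, ∑ k : Fin d, h j *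
          Complex.exp (2 * (Real.pi : ℂ) * Complex.I * ((((j0.1 : ℤ) - (j.1 : ℤ)) : ℤ) : ℂ) * (k.1 : ℂ) / (d : ℂ)) :=
        Finset.sum_comm
    _ = ∑ j : Fin d, h j * (if (d : ℤ) ∣ ((j0.1 : ℤ) - (j.1 : ℤ)) then (d : ℂ) else 0) := by
        refine Finset.sum_congr rfl fun j _ => ?_
        rw [← Finset.mul_sum, orth_sum d hd]
    _ = (d : ℂ) * h j0 := by
        rw [Finset.sum_eq_single j0]
        · rw [if_pos (by simp), mul_comm]
        · intro j _ hne
          rw [if_neg, mul_zero]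
          intro hdvd
          have h0 : ((j0.1 : ℤ) - (j.1 : ℤ)) = 0 := by
            refine Int.eq_zero_of_dvd_of_natAbs_lt_natAbs hdvd ?_
            have h1 := j0.isLt
            have h2 := j.isLt
            omega
          apply hne
          have : j.1 = j0.1 := by omega
          exact Fin.ext this
        · intro hj0; exact absurd (Finset.mem_univ j0) hj0

private lemma key_ineq (d : ℕ) (h : Fin d → ℂ) (j1 : Fin d) (hj1 : h j1 ≠ 0) :
    (d : ℝ) ≤ ((univ.filter fun j : Fin d => h j ≠ 0).card : ℝ) *
      ((univ.filter fun k : Fin d => Fdef d h k ≠ 0).card : ℝ) := by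
  have hd : 0 < d := j1.pos
  obtain ⟨j0, -, hj0⟩ := Finset.exists_max_image (univ : Finset (Fin d))
    (fun j => ‖h j‖) ⟨j1, Finset.mem_univ _⟩
  set M := ‖h j0‖ with hM
  have hMpos : 0 < M := lt_of_lt_of_le (norm_pos_iff.mpr hj1) (hj0 j1 (Finset.mem_univ _))
  set S := univ.filter fun j : Fin d => h j ≠ 0 with hS
  set T := univ.filter fun k : Fin d => Fdef d h k ≠ 0 with hT
  have habs1 : ∀ (j k : Fin d),
      ‖Complex.exp (-2 * (Real.pi : ℂ) * Complex.I * (j.1 : ℂ) * (k.1 : ℂ) / (d : ℂ))‖ = 1 := by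
    intro j k
    have harg : (-2 * (Real.pi : ℂ) * Complex.I * (j.1 : ℂ) * (k.1 : ℂ) / (d : ℂ))
        = ((-2 * Real.pi * (j.1 : ℝ) * (k.1 : ℝ) / (d : ℝ) : ℝ) : ℂ) * Complex.I := by
      push_cast
      ring
    rw [harg, Complex.norm_exp_ofReal_mul_I]
  have habs2 : ∀ (j k : Fin d),
      ‖Complex.exp (2 * (Real.pi : ℂ) * Complex.I * (j.1 : ℂ) * (k.1 : ℂ) / (d : ℂ))‖ = 1 := by
    intro j k
    have harg : (2 * (Real.pi : ℂ) * Complex.I * (j.1 : ℂ) * (k.1 : ℂ) / (d : ℂ))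
        = ((2 * Real.pi * (j.1 : ℝ) * (k.1 : ℝ) / (d : ℝ) : ℝ) : ℂ) * Complex.I := by
      push_cast
      ring
    rw [harg, Complex.norm_exp_ofReal_mul_I]
  have bound1 : ∀ k : Fin d, ‖Fdef d h k‖ ≤ (S.card : ℝ) * M := by
    intro k
    calc ‖Fdef d h k‖
        ≤ ∑ j : Fin d, ‖h j *
            Complex.exp (-2 * (Real.pi : ℂ) * Complex.I * (j.1 : ℂ) * (k.1 : ℂ) / (d : ℂ))‖ :=
          norm_sum_le _ _
      _ = ∑ j : Fin d, ‖h j‖ := by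
          refine Finset.sum_congr rfl fun j _ => ?_
          rw [norm_mul, habs1, mul_one]
      _ = ∑ j ∈ S, ‖h j‖ := by
          refine (Finset.sum_subset (Finset.filter_subset _ _) fun j _ hj => ?_).symm
          simp only [hS, Finset.mem_filter, Finset.mem_univ, true_and, not_not] at hj
          simp [hj]
      _ ≤ ∑ _j ∈ S, M := Finset.sum_le_sum fun j _ => hj0 j (Finset.mem_univ _)
      _ = (S.card : ℝ) * M := by rw [Finset.sum_const, nsmul_eq_mul]
  have main : (d : ℝ) * M ≤ (T.card : ℝ) * ((S.card : ℝ) * M) := by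
    have h1 : (d : ℝ) * M = ‖(d : ℂ) * h j0‖ := by
      rw [norm_mul, Complex.norm_natCast]
    rw [h1, ← inv_formula d hd h j0]
    calc ‖∑ k : Fin d, Fdef d h k *
          Complex.exp (2 * (Real.pi : ℂ) * Complex.I * (j0.1 : ℂ) * (k.1 : ℂ) / (d : ℂ))‖
        ≤ ∑ k : Fin d, ‖Fdef d h k *
            Complex.exp (2 * (Real.pi : ℂ) * Complex.I * (j0.1 : ℂ) * (k.1 : ℂ) / (d : ℂ))‖ :=
          norm_sum_le _ _
      _ = ∑ k : Fin d, ‖Fdef d h k‖ := by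
          refine Finset.sum_congr rfl fun k _ => ?_
          rw [norm_mul, habs2, mul_one]
      _ = ∑ k ∈ T, ‖Fdef d h k‖ := by
          refine (Finset.sum_subset (Finset.filter_subset _ _) fun k _ hk => ?_).symm
          simp only [hT, Finset.mem_filter, Finset.mem_univ, true_and, not_not] at hk
          simp [hk]
      _ ≤ ∑ _k ∈ T, ((S.card : ℝ) * M) := Finset.sum_le_sum fun k _ => bound1 k
      _ = (T.card : ℝ) * ((S.card : ℝ) * M) := by rw [Finset.sum_const, nsmul_eq_mul]
  have : (d : ℝ) * M ≤ ((S.card : ℝ) * (T.card : ℝ)) * M := by nlinarith [main]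
  exact le_of_mul_le_mul_right this hMpos

theorem donoho_stark_uncertainty_sum (d : ℕ) (h : Fin d → ℂ) (hh : h ≠ 0) :
    ((((univ.filter fun j : Fin d => h j ≠ 0).card : ℝ) +
      ((univ.filter fun k : Fin d =>
        (∑ j : Fin d, h j *
          Complex.exp (-2 * (Real.pi : ℂ) * Complex.I * (j.1 : ℂ) * (k.1 : ℂ) / (d : ℂ))) ≠ 0).card : ℝ)) / 2) ^ 2
      ≥ d := by
  obtain ⟨j1, hj1⟩ := Function.ne_iff.mp hh
  have hfilter : (univ.filter fun k : Fin d =>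
      (∑ j : Fin d, h j *
        Complex.exp (-2 * (Real.pi : ℂ) * Complex.I * (j.1 : ℂ) * (k.1 : ℂ) / (d : ℂ))) ≠ 0)
      = univ.filter fun k : Fin d => Fdef d h k ≠ 0 := rfl
  rw [hfilter]
  have hkey := key_ineq d h j1 hj1
  set a := ((univ.filter fun j : Fin d => h j ≠ 0).card : ℝ) with ha'
  set b := ((univ.filter fun k : Fin d => Fdef d h k ≠ 0).card : ℝ) with hb'
  have ha : 0 ≤ a := Nat.cast_nonneg _
  have hb : 0 ≤ b := Nat.cast_nonneg _
  nlinarith [hkey, sq_nonneg (a - b)]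
end

section
/- Let X be a finite-dimensional Banach space, 1 < p < ∞ with conjugate exponent q, and let ({f_j}_{j=1}^n, {τ_j}_{j=1}^n) and ({g_k}_{k=1}^m, {ω_k}_{k=1}^m) be p-Schauder frames for X. Then for every nonzero x ∈ X, ‖x‖^p ≤ (max_{j,k} |f_j(ω_k)|)^p · ‖θ_f x‖_0 · ‖x‖^p · (‖θ_g x‖_0)^{p/q}. -/
open Finset

theorem key_intermediate_estimate
    {𝕂 : Type*} [RCLike 𝕂] {X : Type*} [NormedAddCommGroup X] [NormedSpace 𝕂 X]
    [FiniteDimensional 𝕂 X]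
    {n m : ℕ} (p q : ℝ) (hp : 1 < p) (hpq : 1 / p + 1 / q = 1)
    (f : Fin n → (X →L[𝕂] 𝕂)) (τ : Fin n → X)
    (g : Fin m → (X →L[𝕂] 𝕂)) (ω : Fin m → X)
    (hf1 : ∀ x : X, ‖x‖ ^ p = ∑ j, ‖f j x‖ ^ p)
    (hf2 : ∀ x : X, x = ∑ j, f j x • τ j)
    (hg1 : ∀ x : X, ‖x‖ ^ p = ∑ k, ‖g k x‖ ^ p)
    (hg2 : ∀ x : X, x = ∑ k, g k x • ω k)
    (x : X) (hx : x ≠ 0) :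
    ‖x‖ ^ p ≤ (⨆ jk : Fin n × Fin m, ‖f jk.1 (ω jk.2)‖) ^ p *
      ((univ.filter fun j => f j x ≠ 0).card : ℝ) * ‖x‖ ^ p *
      ((univ.filter fun k => g k x ≠ 0).card : ℝ) ^ (p / q) := by
  have hcj : Real.HolderConjugate p q := Real.holderConjugate_iff.mpr ⟨hp, by simpa [one_div] using hpq⟩
  set A : ℝ := ⨆ jk : Fin n × Fin m, ‖f jk.1 (ω jk.2)‖ with hA
  set Sf : Finset (Fin n) := univ.filter fun j => f j x ≠ 0 with hSf
  set Sg : Finset (Fin m) := univ.filter fun k => g k x ≠ 0 with hSg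
  have hxnorm : (0:ℝ) ≤ ‖x‖ := norm_nonneg x
  have hAnn : 0 ≤ A := Real.iSup_nonneg fun jk => norm_nonneg _
  have hAle : ∀ j k, ‖f j (ω k)‖ ≤ A := fun j k =>
    le_ciSup (f := fun jk : Fin n × Fin m => ‖f jk.1 (ω jk.2)‖)
      (Set.Finite.bddAbove (Set.finite_range _)) (j, k)
  have hCg : (0:ℝ) ≤ (Sg.card : ℝ) := Nat.cast_nonneg _
  -- key pointwise bound
  have key : ∀ j, ‖f j x‖ ≤ A * (‖x‖ * (Sg.card : ℝ) ^ (1/q)) := by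
    intro j
    have hrepr : f j x = ∑ k ∈ Sg, g k x * f j (ω k) := by
      conv_lhs => rw [hg2 x]
      rw [map_sum]
      simp only [map_smul, smul_eq_mul]
      refine (Finset.sum_subset (filter_subset _ _) ?_).symm
      intro k _ hk
      simp only [hSg, mem_filter, mem_univ, true_and, not_not] at hk
      simp [hk]
    calc ‖f j x‖ ≤ ∑ k ∈ Sg, ‖g k x‖ * ‖f j (ω k)‖ := by
          rw [hrepr]
          exact (norm_sum_le _ _).trans (le_of_eq (by simp [norm_mul]))
      _ ≤ ∑ k ∈ Sg, ‖g k x‖ * A := by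
          refine Finset.sum_le_sum fun k _ => ?_
          exact mul_le_mul_of_nonneg_left (hAle j k) (norm_nonneg _)
      _ = (∑ k ∈ Sg, ‖g k x‖ * 1) * A := by rw [← Finset.sum_mul]; simp
      _ ≤ ((∑ k ∈ Sg, ‖g k x‖ ^ p) ^ (1/p) * (∑ k ∈ Sg, (1:ℝ) ^ q) ^ (1/q)) * A := by
          refine mul_le_mul_of_nonneg_right ?_ hAnn
          exact Real.inner_le_Lp_mul_Lq_of_nonneg Sg hcj
            (fun k _ => norm_nonneg _) (fun k _ => zero_le_one)
      _ ≤ (‖x‖ * (Sg.card : ℝ) ^ (1/q)) * A := by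
          refine mul_le_mul_of_nonneg_right ?_ hAnn
          have h1 : (∑ k ∈ Sg, ‖g k x‖ ^ p) ^ (1/p) ≤ ‖x‖ := by
            have hsub : ∑ k ∈ Sg, ‖g k x‖ ^ p ≤ ‖x‖ ^ p := by
              rw [hg1 x]
              exact Finset.sum_le_sum_of_subset_of_nonneg (subset_univ _)
                (fun k _ _ => Real.rpow_nonneg (norm_nonneg _) _)
            calc (∑ k ∈ Sg, ‖g k x‖ ^ p) ^ (1/p) ≤ (‖x‖ ^ p) ^ (1/p) :=
                  Real.rpow_le_rpow (Finset.sum_nonneg fun k _ =>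
                    Real.rpow_nonneg (norm_nonneg _) _) hsub (by positivity)
              _ = ‖x‖ := by
                  rw [← Real.rpow_mul hxnorm, mul_one_div,
                    div_self (ne_of_gt (lt_trans one_pos hp)), Real.rpow_one]
          have h2 : (∑ k ∈ Sg, (1:ℝ) ^ q) ^ (1/q) = (Sg.card : ℝ) ^ (1/q) := by
            simp [Real.one_rpow]
          rw [h2]
          exact mul_le_mul_of_nonneg_right h1 (Real.rpow_nonneg hCg _)
      _ = A * (‖x‖ * (Sg.card : ℝ) ^ (1/q)) := mul_comm _ _
  -- raise to the p-th power
  have keyp : ∀ j, ‖f j x‖ ^ p ≤ A ^ p * ‖x‖ ^ p * (Sg.card : ℝ) ^ (p/q) := by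
    intro j
    have h := Real.rpow_le_rpow (norm_nonneg _) (key j) (le_of_lt (lt_trans one_pos hp))
    refine h.trans (le_of_eq ?_)
    rw [Real.mul_rpow hAnn (mul_nonneg hxnorm (Real.rpow_nonneg hCg _)), Real.mul_rpow hxnorm (Real.rpow_nonneg hCg _),
      ← Real.rpow_mul hCg, show (1/q) * p = p/q by ring, mul_assoc]
  calc ‖x‖ ^ p = ∑ j, ‖f j x‖ ^ p := hf1 x
    _ = ∑ j ∈ Sf, ‖f j x‖ ^ p := by
        refine (Finset.sum_subset (subset_univ _) ?_).symm
        intro j _ hj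
        simp only [hSf, mem_filter, mem_univ, true_and, not_not] at hj
        rw [hj]
        simp [Real.zero_rpow (by positivity : p ≠ 0)]
    _ ≤ ∑ j ∈ Sf, A ^ p * ‖x‖ ^ p * (Sg.card : ℝ) ^ (p/q) :=
        Finset.sum_le_sum fun j _ => keyp j
    _ = (Sf.card : ℝ) * (A ^ p * ‖x‖ ^ p * (Sg.card : ℝ) ^ (p/q)) := by
        rw [Finset.sum_const, nsmul_eq_mul]
    _ = A ^ p * (Sf.card : ℝ) * ‖x‖ ^ p * (Sg.card : ℝ) ^ (p/q) := by ring
end
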